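/- Let n ≥ 1 and suppose the real n×n matrix A has a singular value decomposition A = U · diag(s) · Vᵀ with U, V ∈ O(n) and s : Fin n → ℝ satisfying s i ≥ 0 for all i and s antitone (s i ≥ s j whenever i ≤ j, so s_n is the smallest singular value). Let D be the diagonal matrix with diagonal entries (1, …, 1, −1), and assume det(A) > 0. Then U D Vᵀ is orthogonal with det(U D Vᵀ) = −1, ‖U D Vᵀ − A‖_F² = Σ_{i=1}^n (s_i − 1)² + 4 s_n, and for every orthogonal C with det(C) = −1, ‖C − A‖_F² ≥ Σ_{i=1}^n (s_i − 1)² + 4 s_n. -/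

import Mathlib

open Matrix

/-- The Frobenius norm of a real square matrix: `‖A‖_F = (trace (Aᵀ * A))^(1/2)`. -/
noncomputable def frobNorm {n : ℕ} (A : Matrix (Fin n) (Fin n) ℝ) : ℝ :=
  Real.sqrt (Matrix.trace (Aᵀ * A))

lemma aux_trace_nonneg {n : ℕ} (M : Matrix (Fin n) (Fin n) ℝ) :
    0 ≤ Matrix.trace (Mᵀ * M) := by
  rw [Matrix.trace]
  refine Finset.sum_nonneg fun i _ => ?_
  rw [Matrix.diag_apply, Matrix.mul_apply]
  exact Finset.sum_nonneg fun j _ => by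
    simp only [Matrix.transpose_apply]; exact mul_self_nonneg _

lemma aux_frob_sq {n : ℕ} (M : Matrix (Fin n) (Fin n) ℝ) :
    frobNorm M ^ 2 = Matrix.trace (Mᵀ * M) :=
  Real.sq_sqrt (aux_trace_nonneg M)

lemma aux_mulVec_norm {n : ℕ} {W : Matrix (Fin n) (Fin n) ℝ} (hW : Wᵀ * W = 1)
    (v : Fin n → ℝ) : (W *ᵥ v) ⬝ᵥ (W *ᵥ v) = v ⬝ᵥ v := by
  rw [Matrix.dotProduct_mulVec, ← Matrix.mulVec_transpose, Matrix.mulVec_mulVec, hW,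
    Matrix.one_mulVec]

lemma aux_trace_diagonal_mul {n : ℕ} (s : Fin n → ℝ) (M : Matrix (Fin n) (Fin n) ℝ) :
    Matrix.trace (Matrix.diagonal s * M) = ∑ i, s i * M i i := by
  rw [Matrix.trace]
  refine Finset.sum_congr rfl fun i _ => ?_
  rw [Matrix.diag_apply, Matrix.diagonal_mul]

lemma aux_diag_le_one {n : ℕ} {W : Matrix (Fin n) (Fin n) ℝ} (hW : Wᵀ * W = 1)
    (i : Fin n) : W i i ≤ 1 := by
  have h := congrFun (congrFun hW i) i
  rw [Matrix.mul_apply] at h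
  simp only [Matrix.transpose_apply, Matrix.one_apply_eq] at h
  have h2 : W i i * W i i ≤ ∑ j, W j i * W j i :=
    Finset.single_le_sum (fun j _ => mul_self_nonneg (W j i)) (Finset.mem_univ i)
  nlinarith [h2, h]

lemma aux_trace_le {n : ℕ} {W : Matrix (Fin n) (Fin n) ℝ} (hW : Wᵀ * W = 1)
    (hd : W.det = -1) : Matrix.trace W ≤ (n : ℝ) - 2 := by
  have hW' : W * Wᵀ = 1 := mul_eq_one_comm.mp hW
  -- det (1 + W) = 0
  have h1 : W * (1 + Wᵀ) = 1 + W := by rw [mul_add, mul_one, hW', add_comm]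
  have hdet0 : (1 + W).det = 0 := by
    have h2 := congrArg Matrix.det h1
    rw [Matrix.det_mul, hd] at h2
    have h3 : (1 + Wᵀ).det = (1 + W).det := by
      rw [show (1 : Matrix (Fin n) (Fin n) ℝ) + Wᵀ = (1 + W)ᵀ by
        rw [Matrix.transpose_add, Matrix.transpose_one], Matrix.det_transpose]
    rw [h3] at h2
    linarith
  obtain ⟨x, hx0, hx⟩ := (Matrix.exists_mulVec_eq_zero_iff).mpr hdet0
  have hWx : W *ᵥ x = -x := by
    rw [Matrix.add_mulVec, Matrix.one_mulVec, add_comm] at hx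
    exact eq_neg_of_add_eq_zero_left hx
  -- normalize x
  have hxx : 0 < x ⬝ᵥ x := by
    obtain ⟨j, hj⟩ := Function.ne_iff.mp hx0
    rw [dotProduct]
    refine Finset.sum_pos' (fun i _ => mul_self_nonneg _) ⟨j, Finset.mem_univ j, ?_⟩
    exact mul_self_pos.mpr hj
  set c : ℝ := Real.sqrt (x ⬝ᵥ x) with hc
  have hcpos : 0 < c := Real.sqrt_pos.mpr hxx
  set y : Fin n → ℝ := c⁻¹ • x with hy
  have hc0 : c ≠ 0 := hcpos.ne'
  have hcc : c * c = x ⬝ᵥ x := Real.mul_self_sqrt hxx.le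
  have hyy : y ⬝ᵥ y = 1 := by
    rw [hy, smul_dotProduct, dotProduct_smul, smul_eq_mul, smul_eq_mul, ← hcc]
    field_simp
  have hWy : W *ᵥ y = -y := by
    rw [hy, Matrix.mulVec_smul, hWx, smul_neg]
  have hWty : Wᵀ *ᵥ y = -y := by
    have h4 : Wᵀ *ᵥ (W *ᵥ y) = y := by
      rw [Matrix.mulVec_mulVec, hW, Matrix.one_mulVec]
    rw [hWy, Matrix.mulVec_neg] at h4
    exact neg_eq_iff_eq_neg.mp h4
  set Y : Matrix (Fin n) (Fin n) ℝ := Matrix.of fun i j => y i * y j with hYdef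
  have hYapp : ∀ i j, Y i j = y i * y j := fun i j => rfl
  have hYY : Y * Y = Y := by
    ext i j
    rw [Matrix.mul_apply, hYapp]
    have : ∑ k, Y i k * Y k j = (y i * y j) * (y ⬝ᵥ y) := by
      rw [dotProduct, Finset.mul_sum]
      exact Finset.sum_congr rfl fun k _ => by rw [hYapp, hYapp]; ring
    rw [this, hyy, mul_one]
  have hWY : W * Y = -Y := by
    ext i j
    rw [Matrix.mul_apply, Matrix.neg_apply, hYapp]
    have : ∑ k, W i k * Y k j = (W *ᵥ y) i * y j := by
      rw [Matrix.mulVec, dotProduct, Finset.sum_mul]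
      exact Finset.sum_congr rfl fun k _ => by rw [hYapp]; ring
    rw [this, hWy, Pi.neg_apply]; ring
  have hYW : Y * W = -Y := by
    ext i j
    rw [Matrix.mul_apply, Matrix.neg_apply, hYapp]
    have : ∑ k, Y i k * W k j = y i * (Wᵀ *ᵥ y) j := by
      rw [Matrix.mulVec, dotProduct, Finset.mul_sum]
      exact Finset.sum_congr rfl fun k _ => by
        rw [hYapp, Matrix.transpose_apply]; ring
    rw [this, hWty, Pi.neg_apply]; ring
  set P : Matrix (Fin n) (Fin n) ℝ := 1 - Y with hP
  have hPsymm : ∀ i j, P i j = P j i := by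
    intro i j
    simp only [hP, Matrix.sub_apply, hYapp, Matrix.one_apply]
    rw [mul_comm]
    by_cases h : i = j <;> simp [h, eq_comm]
  have hPWP : P * W * P = W + Y := by
    have e1 : P * W = W + Y := by
      rw [hP, sub_mul, one_mul, hYW, sub_neg_eq_add]
    rw [e1, hP, mul_sub, mul_one, add_mul, hWY, hYY]
    abel
  have htrY : Matrix.trace Y = 1 := by
    rw [Matrix.trace, ← hyy, dotProduct]
    exact Finset.sum_congr rfl fun i _ => by rw [Matrix.diag_apply, hYapp]
  -- bound trace (P * W * P)
  have hbound : Matrix.trace (P * W * P) ≤ (n : ℝ) - 1 := by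
    have hterm : ∀ i : Fin n, (P * W * P) i i ≤ ∑ j, P j i * P j i := by
      intro i
      set q : Fin n → ℝ := fun k => P k i with hq
      have happ : (P * W * P) i i = q ⬝ᵥ (W *ᵥ q) := by
        rw [Matrix.mul_assoc, Matrix.mul_apply, dotProduct]
        refine Finset.sum_congr rfl fun j _ => ?_
        rw [Matrix.mul_apply, Matrix.mulVec, dotProduct, hPsymm i j]
      rw [happ]
      have hnorm : (W *ᵥ q) ⬝ᵥ (W *ᵥ q) = q ⬝ᵥ q := aux_mulVec_norm hW q
      have hCS : q ⬝ᵥ (W *ᵥ q) ≤ (q ⬝ᵥ q + (W *ᵥ q) ⬝ᵥ (W *ᵥ q)) / 2 := by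
        rw [dotProduct, dotProduct, dotProduct, ← Finset.sum_add_distrib,
          Finset.sum_div]
        refine Finset.sum_le_sum fun j _ => ?_
        nlinarith [sq_nonneg (q j - (W *ᵥ q) j)]
      rw [hnorm] at hCS
      calc q ⬝ᵥ (W *ᵥ q) ≤ (q ⬝ᵥ q + q ⬝ᵥ q) / 2 := hCS
        _ = q ⬝ᵥ q := by ring
        _ = ∑ j, P j i * P j i := rfl
    have hsum : Matrix.trace (P * W * P) ≤ ∑ i, ∑ j, P j i * P j i := by
      rw [Matrix.trace]
      exact Finset.sum_le_sum fun i _ => hterm i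
    have hPP : ∑ i, ∑ j, P j i * P j i = Matrix.trace P := by
      have h5 : ∀ i, ∑ j, P j i * P j i = (P * P) i i := by
        intro i
        rw [Matrix.mul_apply]
        exact Finset.sum_congr rfl fun j _ => by rw [hPsymm i j]
      have h6 : P * P = P := by
        rw [hP, sub_mul, one_mul, mul_sub, mul_one, hYY]
        abel
      rw [Matrix.trace]
      refine Finset.sum_congr rfl fun i _ => ?_
      rw [h5 i, h6, Matrix.diag_apply]
    rw [hPP] at hsum
    have htrP : Matrix.trace P = (n : ℝ) - 1 := by
      rw [hP, Matrix.trace_sub, Matrix.trace_one, htrY]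
      simp
    rw [htrP] at hsum
    linarith
  have htr : Matrix.trace (P * W * P) = Matrix.trace W + 1 := by
    rw [hPWP, Matrix.trace_add, htrY]
  linarith

lemma aux_traceAt {n : ℕ} (U V M : Matrix (Fin n) (Fin n) ℝ) (s : Fin n → ℝ) :
    Matrix.trace ((U * Matrix.diagonal s * Vᵀ)ᵀ * M) = ∑ i, s i * (Uᵀ * M * V) i i := by
  have h1 : (U * Matrix.diagonal s * Vᵀ)ᵀ * M = V * (Matrix.diagonal s * (Uᵀ * M)) := by
    rw [Matrix.transpose_mul, Matrix.transpose_mul, Matrix.transpose_transpose,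
      Matrix.diagonal_transpose]
    simp only [Matrix.mul_assoc]
  rw [h1, Matrix.trace_mul_comm]
  have h2 : Matrix.diagonal s * (Uᵀ * M) * V = Matrix.diagonal s * (Uᵀ * M * V) := by
    simp only [Matrix.mul_assoc]
  rw [h2, aux_trace_diagonal_mul]

lemma aux_expand {n : ℕ} (A U V C : Matrix (Fin n) (Fin n) ℝ) (s : Fin n → ℝ)
    (hU : Uᵀ * U = 1) (hV : Vᵀ * V = 1) (hC : Cᵀ * C = 1)
    (hA : A = U * Matrix.diagonal s * Vᵀ) :
    frobNorm (C - A) ^ 2 =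
      (n : ℝ) + (∑ i, s i ^ 2) - 2 * ∑ i, s i * (Uᵀ * C * V) i i := by
  rw [aux_frob_sq]
  rw [Matrix.transpose_sub, Matrix.sub_mul, Matrix.mul_sub, Matrix.mul_sub,
    Matrix.trace_sub, Matrix.trace_sub, Matrix.trace_sub]
  have hCC : Matrix.trace (Cᵀ * C) = (n : ℝ) := by
    rw [hC, Matrix.trace_one]; simp
  have hAC : Matrix.trace (Aᵀ * C) = ∑ i, s i * (Uᵀ * C * V) i i := by
    rw [hA, aux_traceAt]
  have hCA : Matrix.trace (Cᵀ * A) = ∑ i, s i * (Uᵀ * C * V) i i := by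
    rw [← Matrix.trace_transpose, Matrix.transpose_mul, Matrix.transpose_transpose, hAC]
  have hAA : Matrix.trace (Aᵀ * A) = ∑ i, s i ^ 2 := by
    rw [hA, aux_traceAt]
    have h7 : Uᵀ * (U * Matrix.diagonal s * Vᵀ) * V = Matrix.diagonal s := by
      have : Uᵀ * (U * Matrix.diagonal s * Vᵀ) * V
          = (Uᵀ * U) * Matrix.diagonal s * (Vᵀ * V) := by
        simp only [Matrix.mul_assoc]
      rw [this, hU, hV, one_mul, mul_one]
    rw [h7]
    exact Finset.sum_congr rfl fun i _ => by
      rw [Matrix.diagonal_apply_eq]; ring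
  rw [hCC, hAC, hCA, hAA]
  ring

lemma aux_sum_d {n : ℕ} (hn : 0 < n) (s : Fin n → ℝ) :
    ∑ i, s i * (if (i : ℕ) = n - 1 then (-1 : ℝ) else 1)
      = (∑ i, s i) - 2 * s ⟨n - 1, Nat.sub_lt hn Nat.one_pos⟩ := by
  have key : ∑ i, (s i - s i * (if (i : ℕ) = n - 1 then (-1 : ℝ) else 1))
      = 2 * s ⟨n - 1, by omega⟩ := by
    rw [Finset.sum_eq_single (⟨n - 1, by omega⟩ : Fin n)]
    · rw [if_pos rfl]; ring
    · intro b _ hb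
      have hb' : (b : ℕ) ≠ n - 1 := fun h => hb (Fin.ext h)
      simp [hb']
    · intro h
      exact absurd (Finset.mem_univ _) h
  rw [Finset.sum_sub_distrib] at key
  linarith

/-- If `A = U diag(s) Vᵀ` is an SVD with `s` nonnegative and antitone and
`det A > 0`, and `D = diag(1,…,1,-1)`, then `U D Vᵀ` is orthogonal with determinant `-1`,
`‖U D Vᵀ - A‖_F² = Σᵢ (sᵢ-1)² + 4 sₙ`, and every orthogonal `C` with `det C = -1`
satisfies `‖C - A‖_F² ≥ Σᵢ (sᵢ-1)² + 4 sₙ`. -/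
theorem projection_onto_SOneg (n : ℕ) (hn : 0 < n)
    (A U V : Matrix (Fin n) (Fin n) ℝ) (s : Fin n → ℝ)
    (hU : Uᵀ * U = 1) (hV : Vᵀ * V = 1) (hs : ∀ i, 0 ≤ s i) (hmono : Antitone s)
    (hA : A = U * Matrix.diagonal s * Vᵀ) (hdet : 0 < A.det)
    (D : Matrix (Fin n) (Fin n) ℝ)
    (hD : D = Matrix.diagonal (fun i : Fin n => if (i : ℕ) = n - 1 then (-1 : ℝ) else 1)) :
    ((U * D * Vᵀ)ᵀ * (U * D * Vᵀ) = 1) ∧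
    (U * D * Vᵀ).det = -1 ∧
    frobNorm (U * D * Vᵀ - A) ^ 2 = (∑ i, (s i - 1) ^ 2) + 4 * s ⟨n - 1, by omega⟩ ∧
    ∀ C : Matrix (Fin n) (Fin n) ℝ, Cᵀ * C = 1 → C.det = -1 →
      (∑ i, (s i - 1) ^ 2) + 4 * s ⟨n - 1, by omega⟩ ≤ frobNorm (C - A) ^ 2 := by
  have hUU : U * Uᵀ = 1 := mul_eq_one_comm.mp hU
  have hVV : V * Vᵀ = 1 := mul_eq_one_comm.mp hV
  have hDt : Dᵀ = D := by rw [hD, Matrix.diagonal_transpose]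
  have hDD : D * D = 1 := by
    rw [hD, Matrix.diagonal_mul_diagonal]
    have : (fun i : Fin n => (if (i : ℕ) = n - 1 then (-1 : ℝ) else 1)
        * (if (i : ℕ) = n - 1 then (-1 : ℝ) else 1)) = fun _ => (1 : ℝ) := by
      funext i; by_cases h : (i : ℕ) = n - 1 <;> simp [h]
    rw [this, Matrix.diagonal_one]
  -- Part 1
  have part1 : (U * D * Vᵀ)ᵀ * (U * D * Vᵀ) = 1 := by
    have : (U * D * Vᵀ)ᵀ * (U * D * Vᵀ)
        = V * (Dᵀ * ((Uᵀ * U) * (D * Vᵀ))) := by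
      rw [Matrix.transpose_mul, Matrix.transpose_mul, Matrix.transpose_transpose]
      simp only [Matrix.mul_assoc]
    rw [this, hU, one_mul, hDt, ← Matrix.mul_assoc D D, hDD, one_mul, hVV]
  -- determinants
  have hU2 : U.det * U.det = 1 := by
    have := congrArg Matrix.det hU
    rwa [Matrix.det_mul, Matrix.det_transpose, Matrix.det_one] at this
  have hV2 : V.det * V.det = 1 := by
    have := congrArg Matrix.det hV
    rwa [Matrix.det_mul, Matrix.det_transpose, Matrix.det_one] at this
  have hprod : 0 ≤ ∏ i, s i := Finset.prod_nonneg fun i _ => hs i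
  have hdetA : A.det = U.det * V.det * ∏ i, s i := by
    rw [hA, Matrix.det_mul, Matrix.det_mul, Matrix.det_diagonal, Matrix.det_transpose]
    ring
  have hUV : U.det * V.det = 1 := by
    have hp2 : (U.det * V.det) * (U.det * V.det) = 1 := by nlinarith [hU2, hV2]
    have hpA : 0 < U.det * V.det * ∏ i, s i := by rw [← hdetA]; exact hdet
    have hppos : 0 < U.det * V.det := by
      rcases le_or_gt (U.det * V.det) 0 with h | h
      · nlinarith [mul_nonpos_of_nonpos_of_nonneg h hprod]
      · exact h
    rcases mul_self_eq_one_iff.mp hp2 with h | h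
    · exact h
    · exfalso; rw [h] at hppos; linarith
  have hdetD : D.det = -1 := by
    rw [hD, Matrix.det_diagonal]
    rw [Finset.prod_eq_single (⟨n - 1, by omega⟩ : Fin n)]
    · simp
    · intro b _ hb
      have hb' : (b : ℕ) ≠ n - 1 := fun h => hb (Fin.ext h)
      simp [hb']
    · intro h
      exact absurd (Finset.mem_univ _) h
  have part2 : (U * D * Vᵀ).det = -1 := by
    rw [Matrix.det_mul, Matrix.det_mul, Matrix.det_transpose, hdetD]
    linear_combination -hUV
  refine ⟨part1, part2, ?_, ?_⟩
  · -- Part 3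
    have h8 : Uᵀ * (U * D * Vᵀ) * V = D := by
      have : Uᵀ * (U * D * Vᵀ) * V = (Uᵀ * U) * D * (Vᵀ * V) := by
        simp only [Matrix.mul_assoc]
      rw [this, hU, hV, one_mul, mul_one]
    rw [aux_expand A U V (U * D * Vᵀ) s hU hV part1 hA, h8]
    have h9 : ∑ i, s i * D i i
        = (∑ i, s i) - 2 * s ⟨n - 1, by omega⟩ := by
      rw [← aux_sum_d hn s]
      exact Finset.sum_congr rfl fun i _ => by rw [hD, Matrix.diagonal_apply_eq]
    rw [h9]
    have h10 : ∑ i, (s i - 1) ^ 2 = (∑ i, s i ^ 2) - 2 * (∑ i, s i) + n := by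
      have : ∀ i : Fin n, (s i - 1) ^ 2 = s i ^ 2 - 2 * s i + 1 := fun i => by ring
      simp_rw [this]
      rw [Finset.sum_add_distrib, Finset.sum_sub_distrib, ← Finset.mul_sum]
      simp
    rw [h10]
    ring
  · -- Part 4
    intro C hC hCdet
    set W : Matrix (Fin n) (Fin n) ℝ := Uᵀ * C * V with hWdef
    have hWW : Wᵀ * W = 1 := by
      have : Wᵀ * W = Vᵀ * (Cᵀ * ((U * Uᵀ) * (C * V))) := by
        rw [hWdef, Matrix.transpose_mul, Matrix.transpose_mul, Matrix.transpose_transpose]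
        simp only [Matrix.mul_assoc]
      rw [this, hUU, one_mul, ← Matrix.mul_assoc Cᵀ C V, hC, one_mul, hV]
    have hWdet : W.det = -1 := by
      rw [hWdef, Matrix.det_mul, Matrix.det_mul, Matrix.det_transpose, hCdet]
      linear_combination -hUV
    have htrW : Matrix.trace W ≤ (n : ℝ) - 2 := aux_trace_le hWW hWdet
    rw [aux_expand A U V C s hU hV hC hA]
    set sl : ℝ := s ⟨n - 1, by omega⟩ with hsl
    have hkey : ∑ i, s i * W i i ≤ (∑ i, s i) - 2 * sl := by
      have hstep : ∑ i, sl * (1 - W i i) ≤ ∑ i, s i * (1 - W i i) := by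
        refine Finset.sum_le_sum fun i _ => ?_
        have h1W : 0 ≤ 1 - W i i := by linarith [aux_diag_le_one hWW i]
        have hsi : sl ≤ s i := hmono (by
          show i ≤ (⟨n - 1, by omega⟩ : Fin n)
          rw [Fin.le_def]
          have hi := i.isLt
          exact Nat.le_sub_one_of_lt hi)
        exact mul_le_mul_of_nonneg_right hsi h1W
      have hleft : ∑ i, sl * (1 - W i i) = sl * ((n : ℝ) - Matrix.trace W) := by
        rw [← Finset.mul_sum, Matrix.trace]
        congr 1
        rw [Finset.sum_sub_distrib]
        simp [Matrix.diag_apply]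
      have hright : ∑ i, s i * (1 - W i i) = (∑ i, s i) - ∑ i, s i * W i i := by
        rw [← Finset.sum_sub_distrib]
        exact Finset.sum_congr rfl fun i _ => by ring
      have hslnn : 0 ≤ sl := hs _
      have h2sl : 2 * sl ≤ sl * ((n : ℝ) - Matrix.trace W) := by
        have hm := mul_nonneg hslnn (show (0:ℝ) ≤ (n:ℝ) - Matrix.trace W - 2 by linarith)
        nlinarith [hm]
      have hchain : 2 * sl ≤ (∑ i, s i) - ∑ i, s i * W i i := by
        calc 2 * sl ≤ sl * ((n : ℝ) - Matrix.trace W) := h2sl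
          _ = ∑ i, sl * (1 - W i i) := hleft.symm
          _ ≤ ∑ i, s i * (1 - W i i) := hstep
          _ = _ := hright
      linarith
    have h10 : ∑ i, (s i - 1) ^ 2 = (∑ i, s i ^ 2) - 2 * (∑ i, s i) + n := by
      have : ∀ i : Fin n, (s i - 1) ^ 2 = s i ^ 2 - 2 * s i + 1 := fun i => by ring
      simp_rw [this]
      rw [Finset.sum_add_distrib, Finset.sum_sub_distrib, ← Finset.mul_sum]
      simp
    rw [h10]
    linarith [hkey]
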